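/- Let H be a real Hilbert space, (φ_i)_{i∈I} a Hilbert (orthonormal) basis of H, I_m a finite subset of I, and J an arbitrary subset of I. Let m be the subspace spanned by {φ_i : i ∈ I_m}, let m'' be the subspace spanned by {φ_i : i ∈ I_m ∩ J}, and let V be the closed subspace generated by {φ_i : i ∈ J}. Then for every s ∈ H: ‖P_{m''} s − s‖² ≤ ‖P_V s − s‖² + ‖P_m s − s‖². -/

import Mathlib

open RealInnerProductSpace

lemma mem_orthogonal_span_of_forall {H : Type*} [NormedAddCommGroup H]
    [InnerProductSpace ℝ H] {S : Set H} {w : H} (h : ∀ v ∈ S, ⟪v, w⟫ = 0) :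
    w ∈ (Submodule.span ℝ S)ᗮ := by
  rw [Submodule.mem_orthogonal]
  intro u hu
  induction hu using Submodule.span_induction with
  | mem x hx => exact h x hx
  | zero => simp
  | add x y _ _ hx hy => simp [inner_add_left, hx, hy]
  | smul a x _ hx => simp [inner_smul_left, hx]

/-- the truncation inequality: projecting on the truncated model `m''`
(spanned by the basis vectors of `m` whose index lies in `J`) loses at most the linear
approximation error on `V` plus the approximation error on `m`. -/
theorem stmt_5 {H : Type*} [NormedAddCommGroup H] [InnerProductSpace ℝ H] [CompleteSpace H]
    {I : Type*} (φ : HilbertBasis I ℝ H) (Im : Finset I) (J : Set I)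
    (m m'' V : Submodule ℝ H)
    (hm : m = Submodule.span ℝ (φ '' (Im : Set I)))
    (hm'' : m'' = Submodule.span ℝ (φ '' ((Im : Set I) ∩ J)))
    (hV : V = (Submodule.span ℝ (φ '' J)).topologicalClosure)
    (s : H)
    -- the orthogonal projections of `s` onto `m''`, `V` and `m`
    (q qV qm : H)
    (hq : q ∈ m'' ∧ s - q ∈ m''ᗮ)
    (hqV : qV ∈ V ∧ s - qV ∈ Vᗮ)
    (hqm : qm ∈ m ∧ s - qm ∈ mᗮ) :
    ‖q - s‖ ^ 2 ≤ ‖qV - s‖ ^ 2 + ‖qm - s‖ ^ 2 := by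
  obtain ⟨hq1, hq2⟩ := hq
  obtain ⟨hqV1, hqV2⟩ := hqV
  obtain ⟨hqm1, hqm2⟩ := hqm
  have hφ : Orthonormal ℝ (φ : I → H) := φ.orthonormal
  set w : H := qm - q with hw
  -- m'' ≤ m
  have hm''m : m'' ≤ m := by
    rw [hm, hm'']
    exact Submodule.span_mono (Set.image_mono Set.inter_subset_left)
  have hwm : w ∈ m := Submodule.sub_mem _ hqm1 (hm''m hq1)
  -- w ∈ m''ᗮ
  have hwm'' : w ∈ m''ᗮ := by
    have h1 : qm - s ∈ m''ᗮ := Submodule.orthogonal_le hm''m (by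
      simpa using (mᗮ).neg_mem hqm2)
    have : w = (qm - s) + (s - q) := by rw [hw]; abel
    rw [this]
    exact Submodule.add_mem _ h1 hq2
  -- w ∈ Vᗮ
  have hVorth : Vᗮ = (Submodule.span ℝ (φ '' J))ᗮ := by
    rw [hV, ← Submodule.orthogonal_orthogonal_eq_closure,
      Submodule.triorthogonal_eq_orthogonal]
  have hwV : w ∈ Vᗮ := by
    rw [hVorth]
    apply mem_orthogonal_span_of_forall
    rintro v ⟨j, hj, rfl⟩
    by_cases hjIm : j ∈ Im
    · -- φ j ∈ m''
      have : φ j ∈ m'' := by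
        rw [hm'']
        exact Submodule.subset_span ⟨j, ⟨hjIm, hj⟩, rfl⟩
      exact hwm'' (φ j) this
    · -- φ j ∈ mᗮ
      have hjm : φ j ∈ mᗮ := by
        rw [hm]
        apply mem_orthogonal_span_of_forall
        rintro v ⟨i, hi, rfl⟩
        exact hφ.2 (fun h : i = j => hjIm (h ▸ hi))
      rw [real_inner_comm]
      exact hjm w hwm
  -- key: ‖w‖ ≤ ‖qV - s‖
  have hcross : ⟪s - qm, w⟫ = 0 := by
    rw [real_inner_comm]
    exact hqm2 w hwm
  have hws : ⟪w, w⟫ = ⟪s - qV, w⟫ := by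
    have h1 : ⟪qm - s, w⟫ = 0 := by
      rw [show qm - s = -(s - qm) by abel, inner_neg_left, hcross, neg_zero]
    have h2 : ⟪q, w⟫ = 0 := hwm'' q hq1
    have h3 : ⟪qV, w⟫ = 0 := hwV qV hqV1
    calc ⟪w, w⟫ = ⟪qm - s, w⟫ + ⟪s, w⟫ - ⟪q, w⟫ := by
          simp only [hw, inner_sub_left, inner_add_left]; ring
      _ = ⟪s, w⟫ := by rw [h1, h2]; ring
      _ = ⟪s - qV, w⟫ := by rw [inner_sub_left, h3]; ring
  have hwle : ‖w‖ ≤ ‖qV - s‖ := by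
    rcases eq_or_ne w 0 with h | h
    · simp [h]
    · have := real_inner_le_norm (s - qV) w
      rw [← hws, real_inner_self_eq_norm_sq] at this
      have hwpos : 0 < ‖w‖ := norm_pos_iff.mpr h
      have h4 : ‖w‖ ≤ ‖s - qV‖ := by nlinarith
      rw [norm_sub_rev qV s]; exact h4
  -- Pythagorean decomposition: ‖q - s‖² = ‖qm - s‖² + ‖w‖²
  have hdecomp : ‖q - s‖ ^ 2 = ‖qm - s‖ ^ 2 + ‖w‖ ^ 2 := by
    have hqs : q - s = (qm - s) - w := by rw [hw]; abel
    have hzero : ⟪qm - s, w⟫ = 0 := by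
      rw [show qm - s = -(s - qm) by abel, inner_neg_left, hcross, neg_zero]
    rw [hqs, norm_sub_sq_real, hzero]
    ring
  have : ‖w‖ ^ 2 ≤ ‖qV - s‖ ^ 2 := by
    have := hwle
    nlinarith [norm_nonneg w, norm_nonneg (qV - s)]
  rw [hdecomp]
  linarith
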